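/- Let M be a chain complex of R-modules, N an R-module, and n an integer. Then the disc complex \overline{N}[n] (with N in degrees n+1 and n connected by the identity) lies in the subprojectivity domain of M in the category of complexes if and only if N lies in the subprojectivity domain of the module M_n. -/

import Mathlib

open CategoryTheory CategoryTheory.Limits

universe u

/-- `N` belongs to the subprojectivity domain of `M`: every morphism `M ⟶ N` factors
through a projective object. -/
def SubprojDomain {A : Type*} [Category A] (M N : A) : Prop :=
  ∀ f : M ⟶ N, ∃ (P : A) (_ : Projective P) (a : M ⟶ P) (b : P ⟶ N), a ≫ b = f

/-- The disc complex `\overline{N}[n]`: the module `N` placed in degrees `n+1` and `n`,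
connected by the identity, and `0` elsewhere. -/
def disc {R : Type u} [Ring R] (N : ModuleCat.{u} R) (n : ℤ) :
    ChainComplex (ModuleCat.{u} R) ℤ where
  X i := if i = n + 1 ∨ i = n then N else ModuleCat.of R PUnit
  d i j :=
    if h : i = n + 1 ∧ j = n then
      eqToHom (if_pos (Or.inl h.1)) ≫ eqToHom (if_pos (Or.inr h.2)).symm
    else 0
  shape i j h := by
    rw [dif_neg]
    rintro ⟨rfl, rfl⟩
    exact h rfl
  d_comp_d' i j k hij hjk := by
    simp only [ComplexShape.down_Rel] at hij hjk
    by_cases hc : j = n + 1 ∧ k = n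
    · rw [dif_neg (by omega), zero_comp]
    · rw [dif_neg hc, comp_zero]

section Aux

variable {R : Type u} [Ring R]

lemma disc_X_eq (N : ModuleCat.{u} R) (n i : ℤ) (h : i = n + 1 ∨ i = n) :
    (disc N n).X i = N := if_pos h

lemma disc_X_subsingleton (N : ModuleCat.{u} R) (n i : ℤ) (h : ¬(i = n + 1 ∨ i = n)) :
    Subsingleton ((disc N n).X i) := by
  have e : (disc N n).X i = ModuleCat.of R PUnit := if_neg h
  rw [e]
  infer_instance

lemma hom_ext_target {A B : ModuleCat.{u} R} (hB : Subsingleton B) (f g : A ⟶ B) : f = g := by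
  ext x
  exact Subsingleton.elim _ _

lemma hom_ext_source {A B : ModuleCat.{u} R} (hA : Subsingleton A) (f g : A ⟶ B) : f = g := by
  ext x
  rw [Subsingleton.elim x (0 : A), map_zero, map_zero]

lemma disc_d_eq (N : ModuleCat.{u} R) (n : ℤ) :
    (disc N n).d (n + 1) n =
      eqToHom (disc_X_eq N n (n + 1) (Or.inl rfl)) ≫
        eqToHom (disc_X_eq N n n (Or.inr rfl)).symm := by
  dsimp only [disc]
  rw [dif_pos ⟨rfl, rfl⟩]

lemma disc_d_eq_zero (N : ModuleCat.{u} R) (n i j : ℤ) (h : ¬(i = n + 1 ∧ j = n)) :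
    (disc N n).d i j = 0 := by
  dsimp only [disc]
  rw [dif_neg h]
  rfl

/-- The morphism `M ⟶ disc N n` induced by `f : M.X n ⟶ N`. -/
def toDisc (N : ModuleCat.{u} R) (n : ℤ) (M : ChainComplex (ModuleCat.{u} R) ℤ)
    (f : M.X n ⟶ N) : M ⟶ disc N n where
  f i :=
    if h1 : i = n + 1 then
      eqToHom (congrArg M.X h1) ≫ M.d (n + 1) n ≫ f ≫
        eqToHom (disc_X_eq N n i (Or.inl h1)).symm
    else if h2 : i = n then
      eqToHom (congrArg M.X h2) ≫ f ≫ eqToHom (disc_X_eq N n i (Or.inr h2)).symm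
    else 0
  comm' i j hij := by
    simp only [ComplexShape.down_Rel] at hij
    subst hij
    by_cases h2 : j = n
    · subst h2
      rw [dif_pos rfl, dif_neg (show ¬(j : ℤ) = j + 1 by omega), dif_pos rfl, disc_d_eq]
      simp
    · by_cases h3 : j = n + 1
      · subst h3
        rw [disc_d_eq_zero N n (n + 1 + 1) (n + 1) (by omega), comp_zero, dif_pos rfl]
        simp
      · rw [disc_d_eq_zero N n (j + 1) j (by omega), comp_zero, dif_neg h3, dif_neg h2,
          comp_zero]

lemma toDisc_f_self (N : ModuleCat.{u} R) (n : ℤ) (M : ChainComplex (ModuleCat.{u} R) ℤ)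
    (f : M.X n ⟶ N) :
    (toDisc N n M f).f n = f ≫ eqToHom (disc_X_eq N n n (Or.inr rfl)).symm := by
  dsimp only [toDisc]
  rw [dif_neg (by omega), dif_pos rfl]
  simp

lemma toDisc_f_succ (N : ModuleCat.{u} R) (n : ℤ) (M : ChainComplex (ModuleCat.{u} R) ℤ)
    (f : M.X n ⟶ N) :
    (toDisc N n M f).f (n + 1) =
      M.d (n + 1) n ≫ f ≫ eqToHom (disc_X_eq N n (n + 1) (Or.inl rfl)).symm := by
  dsimp only [toDisc]
  rw [dif_pos rfl]
  simp

/-- The morphism `disc P n ⟶ C` induced by `l : P ⟶ C.X (n+1)`. -/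
def ofDisc (P : ModuleCat.{u} R) (n : ℤ) (C : ChainComplex (ModuleCat.{u} R) ℤ)
    (l : P ⟶ C.X (n + 1)) : disc P n ⟶ C where
  f i :=
    if h1 : i = n + 1 then
      eqToHom (disc_X_eq P n i (Or.inl h1)) ≫ l ≫ eqToHom (congrArg C.X h1).symm
    else if h2 : i = n then
      eqToHom (disc_X_eq P n i (Or.inr h2)) ≫ l ≫ C.d (n + 1) n ≫
        eqToHom (congrArg C.X h2).symm
    else 0
  comm' i j hij := by
    simp only [ComplexShape.down_Rel] at hij
    subst hij
    by_cases h2 : j = n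
    · subst h2
      rw [dif_pos rfl, dif_neg (show ¬(j : ℤ) = j + 1 by omega), dif_pos rfl, disc_d_eq]
      simp
    · by_cases h3 : j + 1 = n
      · subst h3
        rw [disc_d_eq_zero P (j + 1) (j + 1) j (by omega), zero_comp,
          dif_neg (show ¬(j : ℤ) + 1 = j + 1 + 1 by omega), dif_pos rfl]
        simp
      · rw [disc_d_eq_zero P n (j + 1) j (by omega), zero_comp,
          dif_neg (show ¬(j : ℤ) + 1 = n + 1 by omega), dif_neg h3, zero_comp]

/-- A projective chain complex has projective components. -/
lemma X_projective (P : ChainComplex (ModuleCat.{u} R) ℤ) (hP : Projective P) (n : ℤ) :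
    Projective (P.X n) where
  factors {E X} g e he := by
    haveI := he
    haveI hepi : Epi (toDisc X n (disc E n)
        (eqToHom (disc_X_eq E n n (Or.inr rfl)) ≫ e)) := by
      apply HomologicalComplex.epi_of_epi_f
      intro i
      by_cases h1 : i = n + 1
      · subst h1
        rw [toDisc_f_succ, disc_d_eq]
        infer_instance
      · by_cases h2 : i = n
        · subst h2
          rw [toDisc_f_self]
          infer_instance
        · haveI := disc_X_subsingleton X n i (by tauto)
          rw [ModuleCat.epi_iff_surjective]
          intro y
          exact ⟨0, Subsingleton.elim _ _⟩
    obtain ⟨h, hh⟩ := hP.factors (toDisc X n P g)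
      (toDisc X n (disc E n) (eqToHom (disc_X_eq E n n (Or.inr rfl)) ≫ e))
    refine ⟨h.f n ≫ eqToHom (disc_X_eq E n n (Or.inr rfl)), ?_⟩
    have hcomp := HomologicalComplex.congr_hom hh n
    rw [HomologicalComplex.comp_f, toDisc_f_self, toDisc_f_self] at hcomp
    rw [← cancel_mono (eqToHom (disc_X_eq X n n (Or.inr rfl)).symm)]
    simpa [Category.assoc] using hcomp

/-- The disc complex on a projective module is projective. -/
lemma disc_projective (P : ModuleCat.{u} R) (n : ℤ) (hP : Projective P) :
    Projective (disc P n) where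
  factors {E X} g e he := by
    haveI := he
    obtain ⟨l, hl⟩ := hP.factors
      (eqToHom (disc_X_eq P n (n + 1) (Or.inl rfl)).symm ≫ g.f (n + 1)) (e.f (n + 1))
    refine ⟨ofDisc P n E l, HomologicalComplex.hom_ext _ _ fun i => ?_⟩
    rw [HomologicalComplex.comp_f]
    by_cases h1 : i = n + 1
    · subst h1
      dsimp only [ofDisc]
      rw [dif_pos rfl]
      simp only [eqToHom_refl, Category.comp_id, Category.assoc]
      rw [hl]
      simp
    · by_cases h2 : i = n
      · subst h2
        dsimp only [ofDisc]
        rw [dif_neg (show ¬(i : ℤ) = i + 1 by omega), dif_pos rfl]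
        simp only [eqToHom_refl, Category.comp_id, Category.assoc]
        rw [← e.comm (i + 1) i, ← Category.assoc l, hl]
        simp only [Category.assoc]
        rw [g.comm (i + 1) i, disc_d_eq]
        simp
      · exact hom_ext_source (disc_X_subsingleton P n i (by tauto)) _ _

end Aux

/-- the disc complex `\overline{N}[n]` lies in the subprojectivity domain of
the complex `M` iff the module `N` lies in the subprojectivity domain of `M_n`. -/
theorem disc_subprojDomain_iff
    {R : Type u} [Ring R] (M : ChainComplex (ModuleCat.{u} R) ℤ) (N : ModuleCat.{u} R)
    (n : ℤ) :
    SubprojDomain M (disc N n) ↔ SubprojDomain (M.X n) N := by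
  constructor
  · intro H f
    obtain ⟨P, hP, a, b, hab⟩ := H (toDisc N n M f)
    refine ⟨P.X n, X_projective P hP n, a.f n,
      b.f n ≫ eqToHom (disc_X_eq N n n (Or.inr rfl)), ?_⟩
    have hcomp := HomologicalComplex.congr_hom hab n
    rw [HomologicalComplex.comp_f, toDisc_f_self] at hcomp
    rw [← Category.assoc, hcomp]
    simp
  · intro H F
    obtain ⟨P, hP, a, b, hab⟩ := H (F.f n ≫ eqToHom (disc_X_eq N n n (Or.inr rfl)))
    refine ⟨disc P n, disc_projective P n hP, toDisc P n M a,
      toDisc N n (disc P n) (eqToHom (disc_X_eq P n n (Or.inr rfl)) ≫ b),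
      HomologicalComplex.hom_ext _ _ fun i => ?_⟩
    rw [HomologicalComplex.comp_f]
    by_cases h1 : i = n + 1
    · subst h1
      rw [toDisc_f_succ, toDisc_f_succ, disc_d_eq]
      have hc := F.comm (n + 1) n
      rw [disc_d_eq] at hc
      simp only [eqToHom_trans] at hc
      simp only [Category.assoc, eqToHom_trans, eqToHom_trans_assoc, eqToHom_refl, Category.comp_id,
        Category.id_comp]
      rw [reassoc_of% hab]
      simp only [eqToHom_trans]
      rw [← Category.assoc, ← hc, Category.assoc, eqToHom_trans, eqToHom_refl,
        Category.comp_id]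
    · by_cases h2 : i = n
      · subst h2
        rw [toDisc_f_self, toDisc_f_self]
        simp only [Category.assoc, eqToHom_trans, eqToHom_trans_assoc, eqToHom_refl, Category.comp_id,
          Category.id_comp]
        rw [reassoc_of% hab]
        simp
      · exact hom_ext_target (disc_X_subsingleton N n i (by tauto)) _ _
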